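/- arXiv:1809.02707 — 4 statements merged into one kernel-verified Lean document; each statement's English description precedes it below -/
import Mathlib

section
/- Let (Ω, F, P) be a probability space with a filtration F_0 ⊆ F_1 ⊆ ... ⊆ F_n, and let X_1, ..., X_n be random variables such that each X_t takes values in {0,1}, is measurable with respect to F_t, and satisfies E[X_t | F_{t-1}] ≥ μ almost surely, where μ ∈ [0,1]. Let Y = X_1 + ... + X_n. Then for every δ ∈ (0,1), P(Y ≤ (1-δ) n μ) ≤ exp(-δ² n μ / 2). -/
open MeasureTheory Finset Real

/-- Analytic key inequality: `exp (-δ) ≤ 1 - δ + δ^2/2` for `0 ≤ δ`. -/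
lemma exp_neg_le_quadratic {δ : ℝ} (hδ : 0 ≤ δ) :
    Real.exp (-δ) ≤ 1 - δ + δ ^ 2 / 2 := by
  have h := Real.quadratic_le_exp_of_nonneg hδ
  have key : Real.exp (-δ) * Real.exp δ = 1 := by
    rw [← Real.exp_add]; simp
  have hp := Real.exp_pos (-δ)
  nlinarith [sq_nonneg (δ ^ 2), sq_nonneg δ, hp.le, Real.exp_pos δ]

/-- Multiplicative Chernoff bound for Bernoulli random variables whose conditional
means (given the past) are lower bounded by `μ`. -/
theorem multiplicative_chernoff_bound
    {Ω : Type*} {m0 : MeasurableSpace Ω} (P : Measure Ω) [IsProbabilityMeasure P]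
    (ℱ : Filtration ℕ m0) (n : ℕ) (hn : 1 ≤ n)
    (X : ℕ → Ω → ℝ) (μ : ℝ) (hμ : μ ∈ Set.Icc (0:ℝ) 1)
    (hval : ∀ t, 1 ≤ t → t ≤ n → ∀ ω, X t ω = 0 ∨ X t ω = 1)
    (hmeas : ∀ t, 1 ≤ t → t ≤ n → Measurable[ℱ t] (X t))
    (hcond : ∀ t, 1 ≤ t → t ≤ n → ∀ᵐ ω ∂P, μ ≤ (P[X t | ℱ (t - 1)]) ω)
    (δ : ℝ) (hδ : δ ∈ Set.Ioo (0:ℝ) 1) :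
    P {ω | ∑ t ∈ Finset.Icc 1 n, X t ω ≤ (1 - δ) * n * μ}
      ≤ ENNReal.ofReal (Real.exp (-(δ ^ 2 * n * μ) / 2)) := by
  obtain ⟨hμ0, hμ1⟩ := hμ
  obtain ⟨hδ0, hδ1⟩ := hδ
  -- basic facts about X
  have hX01 : ∀ t, 1 ≤ t → t ≤ n → ∀ ω, 0 ≤ X t ω ∧ X t ω ≤ 1 := by
    intro t h1 h2 ω
    rcases hval t h1 h2 ω with h | h <;> rw [h] <;> norm_num
  have hXmeas : ∀ t, 1 ≤ t → t ≤ n → Measurable (X t) := fun t h1 h2 =>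
    (hmeas t h1 h2).mono (ℱ.le t) le_rfl
  -- the exponential process
  set a : ℝ := 1 - Real.exp (-δ) with ha_def
  have ha0 : 0 ≤ a := by
    have : Real.exp (-δ) ≤ 1 := Real.exp_le_one_iff.mpr (by linarith)
    linarith
  have ha1 : a < 1 := by
    have : 0 < Real.exp (-δ) := Real.exp_pos _
    simp only [ha_def]; linarith
  set c : ℝ := 1 - a * μ with hc_def
  have hc0 : 0 < c := by nlinarith
  have hc1 : c ≤ 1 := by nlinarith
  set Z : ℕ → Ω → ℝ := fun k ω => ∏ t ∈ Finset.Icc 1 k, Real.exp (-δ * X t ω) with hZ_def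
  have hZmeasF : ∀ k, k ≤ n → Measurable[ℱ k] (Z k) := by
    intro k hk
    apply Finset.measurable_prod
    intro t ht
    rw [Finset.mem_Icc] at ht
    exact (((hmeas t ht.1 (ht.2.trans hk)).mono (ℱ.mono ht.2) le_rfl).const_mul (-δ)).exp
  have hZmeas : ∀ k, k ≤ n → Measurable (Z k) := fun k hk =>
    (hZmeasF k hk).mono (ℱ.le k) le_rfl
  have hZ01 : ∀ k, k ≤ n → ∀ ω, 0 ≤ Z k ω ∧ Z k ω ≤ 1 := by
    intro k hk ω
    constructor
    · exact Finset.prod_nonneg fun t _ => (Real.exp_pos _).le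
    · apply Finset.prod_le_one (fun t _ => (Real.exp_pos _).le)
      intro t ht
      rw [Finset.mem_Icc] at ht
      have := (hX01 t ht.1 (ht.2.trans hk) ω).1
      exact Real.exp_le_one_iff.mpr (by nlinarith)
  have hZint : ∀ k, k ≤ n → Integrable (Z k) P := by
    intro k hk
    refine Integrable.mono' (integrable_const (1:ℝ)) (hZmeas k hk).aestronglyMeasurable
      (Filter.Eventually.of_forall fun ω => ?_)
    rw [Real.norm_eq_abs, abs_of_nonneg (hZ01 k hk ω).1]
    exact (hZ01 k hk ω).2
  have hXint : ∀ t, 1 ≤ t → t ≤ n → Integrable (X t) P := by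
    intro t h1 h2
    refine Integrable.mono' (integrable_const (1:ℝ)) (hXmeas t h1 h2).aestronglyMeasurable
      (Filter.Eventually.of_forall fun ω => ?_)
    rw [Real.norm_eq_abs, abs_of_nonneg (hX01 t h1 h2 ω).1]
    exact (hX01 t h1 h2 ω).2
  -- key induction: E[Z k] ≤ c ^ k
  have key : ∀ k, k ≤ n → ∫ ω, Z k ω ∂P ≤ c ^ k := by
    intro k
    induction k with
    | zero =>
      intro _
      simp [hZ_def]
    | succ k ih =>
      intro hk1
      have hkn : k ≤ n := Nat.le_of_succ_le hk1
      have h1k : 1 ≤ k + 1 := Nat.succ_le_succ (Nat.zero_le k)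
      have ihk := ih hkn
      set Xs : Ω → ℝ := X (k + 1) with hXs_def
      have hZXint : Integrable (fun ω => Z k ω * Xs ω) P := by
        refine Integrable.bdd_mul (hXint (k+1) h1k hk1) (hZmeas k hkn).aestronglyMeasurable
          (c := 1) (Filter.Eventually.of_forall fun ω => ?_)
        rw [Real.norm_eq_abs, abs_of_nonneg (hZ01 k hkn ω).1]
        exact (hZ01 k hkn ω).2
      have pull : P[Z k * Xs | ℱ k] =ᵐ[P] Z k * P[Xs | ℱ k] :=
        condExp_mul_of_stronglyMeasurable_left (hZmeasF k hkn).stronglyMeasurable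
          (by exact hZXint) (hXint (k+1) h1k hk1)
      have hIZnonneg : 0 ≤ ∫ ω, Z k ω ∂P :=
        integral_nonneg fun ω => (hZ01 k hkn ω).1
      have hcondk : ∀ᵐ ω ∂P, μ ≤ (P[Xs | ℱ k]) ω := by
        have := hcond (k+1) h1k hk1
        simpa using this
      have hcondint : Integrable (fun ω => Z k ω * (P[Xs | ℱ k]) ω) P := by
        refine Integrable.bdd_mul integrable_condExp (hZmeas k hkn).aestronglyMeasurable
          (c := 1) (Filter.Eventually.of_forall fun ω => ?_)
        rw [Real.norm_eq_abs, abs_of_nonneg (hZ01 k hkn ω).1]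
        exact (hZ01 k hkn ω).2
      have step1 : μ * ∫ ω, Z k ω ∂P ≤ ∫ ω, Z k ω * Xs ω ∂P := by
        calc μ * ∫ ω, Z k ω ∂P = ∫ ω, μ * Z k ω ∂P := (integral_const_mul μ _).symm
          _ ≤ ∫ ω, Z k ω * (P[Xs | ℱ k]) ω ∂P := by
              refine integral_mono_ae ((hZint k hkn).const_mul μ) hcondint ?_
              filter_upwards [hcondk] with ω hω
              have h0 := (hZ01 k hkn ω).1
              calc μ * Z k ω = Z k ω * μ := mul_comm _ _
                _ ≤ Z k ω * (P[Xs | ℱ k]) ω := mul_le_mul_of_nonneg_left hω h0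
          _ = ∫ ω, (P[Z k * Xs | ℱ k]) ω ∂P := by
              refine (integral_congr_ae ?_).symm
              filter_upwards [pull] with ω hω
              simpa [Pi.mul_apply] using hω
          _ = ∫ ω, Z k ω * Xs ω ∂P := by
              have := integral_condExp (m := ℱ k) (μ := P) (f := Z k * Xs) (ℱ.le k)
              simpa [Pi.mul_apply] using this
      -- rewrite Z (k+1)
      have hsplit : ∀ ω, Z (k+1) ω = Z k ω * (1 - a * Xs ω) := by
        intro ω
        have : Z (k+1) ω = Z k ω * Real.exp (-δ * Xs ω) := by
          simp only [hZ_def]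
          exact Finset.prod_Icc_succ_top h1k _
        rw [this]
        congr 1
        rcases hval (k+1) h1k hk1 ω with h | h <;> rw [hXs_def, h] <;> simp [ha_def]
      calc ∫ ω, Z (k+1) ω ∂P = ∫ ω, Z k ω - a * (Z k ω * Xs ω) ∂P := by
              apply integral_congr_ae
              apply Filter.Eventually.of_forall
              intro ω
              rw [hsplit ω]; ring
        _ = (∫ ω, Z k ω ∂P) - a * ∫ ω, Z k ω * Xs ω ∂P := by
              rw [integral_sub (hZint k hkn) (hZXint.const_mul a), integral_const_mul]
        _ ≤ (∫ ω, Z k ω ∂P) - a * (μ * ∫ ω, Z k ω ∂P) := by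
              have := mul_le_mul_of_nonneg_left step1 ha0
              linarith
        _ = c * ∫ ω, Z k ω ∂P := by rw [hc_def]; ring
        _ ≤ c * c ^ k := mul_le_mul_of_nonneg_left ihk hc0.le
        _ = c ^ (k + 1) := by ring
  -- Markov's inequality
  set Y : Ω → ℝ := fun ω => ∑ t ∈ Finset.Icc 1 n, X t ω with hY_def
  have hZn : ∀ ω, Z n ω = Real.exp (-δ * Y ω) := by
    intro ω
    rw [hZ_def, hY_def]
    simp only [Finset.mul_sum]
    exact (Real.exp_sum _ _).symm
  set ε : ℝ := Real.exp (-δ * ((1 - δ) * n * μ)) with hε_def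
  have hεpos : 0 < ε := Real.exp_pos _
  have hsub : {ω | Y ω ≤ (1 - δ) * n * μ} ⊆ {ω | ε ≤ Z n ω} := by
    intro ω hω
    simp only [Set.mem_setOf_eq] at hω ⊢
    rw [hZn ω, hε_def]
    apply Real.exp_le_exp.mpr
    nlinarith
  have markov := mul_meas_ge_le_integral_of_nonneg
    (μ := P) (f := Z n) (Filter.Eventually.of_forall fun ω => (hZ01 n le_rfl ω).1)
    (hZint n le_rfl) ε
  have hPle : (P {ω | Y ω ≤ (1 - δ) * n * μ}).toReal ≤ (P {ω | ε ≤ Z n ω}).toReal :=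
    ENNReal.toReal_mono (measure_ne_top P _) (measure_mono hsub)
  have hEZn : ∫ ω, Z n ω ∂P ≤ c ^ n := key n le_rfl
  -- combine
  have hfinal : (P {ω | Y ω ≤ (1 - δ) * n * μ}).toReal ≤ Real.exp (-(δ ^ 2 * n * μ) / 2) := by
    have h1 : ε * (P {ω | Y ω ≤ (1 - δ) * n * μ}).toReal ≤ c ^ n := by
      calc ε * (P {ω | Y ω ≤ (1 - δ) * n * μ}).toReal
          ≤ ε * (P {ω | ε ≤ Z n ω}).toReal := mul_le_mul_of_nonneg_left hPle hεpos.le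
        _ ≤ ∫ ω, Z n ω ∂P := markov
        _ ≤ c ^ n := hEZn
    have hcexp : c ^ n ≤ Real.exp (-(a * μ) * n) := by
      have h2 : c ≤ Real.exp (-(a * μ)) := by
        have := Real.add_one_le_exp (-(a * μ))
        rw [hc_def]; linarith
      calc c ^ n ≤ (Real.exp (-(a * μ))) ^ n := pow_le_pow_left₀ hc0.le h2 n
        _ = Real.exp (-(a * μ) * n) := by rw [← Real.exp_nat_mul]; ring_nf
    have h3 : ε * (P {ω | Y ω ≤ (1 - δ) * n * μ}).toReal ≤ Real.exp (-(a * μ) * n) :=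
      h1.trans hcexp
    -- divide by ε
    have h4 : (P {ω | Y ω ≤ (1 - δ) * n * μ}).toReal ≤ Real.exp (-(a * μ) * n) / ε :=
      (le_div_iff₀ hεpos).mpr (by linarith [h3, mul_comm ε (P {ω | Y ω ≤ (1 - δ) * n * μ}).toReal])
    refine h4.trans ?_
    rw [hε_def, ← Real.exp_sub]
    apply Real.exp_le_exp.mpr
    have hkey : δ * (1 - δ) - a ≤ -δ ^ 2 / 2 := by
      have := exp_neg_le_quadratic hδ0.le
      rw [ha_def]; nlinarith
    have hnμ : 0 ≤ (n : ℝ) * μ := mul_nonneg (Nat.cast_nonneg n) hμ0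
    have : -(a * μ) * n - -δ * ((1 - δ) * n * μ) = (δ * (1 - δ) - a) * (n * μ) := by ring
    rw [this]
    calc (δ * (1 - δ) - a) * (n * μ) ≤ (-δ ^ 2 / 2) * (n * μ) :=
          mul_le_mul_of_nonneg_right hkey hnμ
      _ = -(δ ^ 2 * n * μ) / 2 := by ring
  rw [show {ω | ∑ t ∈ Finset.Icc 1 n, X t ω ≤ (1 - δ) * n * μ}
      = {ω | Y ω ≤ (1 - δ) * n * μ} from rfl]
  exact (ENNReal.le_ofReal_iff_toReal_le (measure_ne_top P _) (Real.exp_pos _).le).mpr hfinal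
end

section
/- Let a and b be positive integers with n := a + b - 2 ≥ 1, let μ̂ := (a-1)/n, and let θ be a random variable distributed according to the Beta distribution with parameters a and b. Then for every real T > 1, P( θ - μ̂ > sqrt(2 log T / n) ) ≤ 1/T. -/
open MeasureTheory Real

noncomputable def betaMeasure (a b : ℕ) : Measure ℝ :=
  (volume.restrict (Set.Icc (0:ℝ) 1)).withDensity fun x =>
    ENNReal.ofReal
      (x ^ (a - 1) * (1 - x) ^ (b - 1) /
        ∫ t in Set.Icc (0:ℝ) 1, t ^ (a - 1) * (1 - t) ^ (b - 1))


lemma one_sub_le_exp_neg {r : ℝ} (h0 : 0 ≤ r) (h1 : r ≤ 1) :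
    1 - r ≤ Real.exp (-(r + r ^ 2 / 2)) := by
  have hb := Real.exp_bound (x := r) (by rw [abs_of_nonneg h0]; exact h1) (n := 3) (by norm_num)
  rw [abs_of_nonneg h0] at hb
  have hsum : ∑ m ∈ Finset.range 3, r ^ m / (m.factorial : ℝ) = 1 + r + r ^ 2 / 2 := by
    norm_num [Finset.sum_range_succ, Nat.factorial]
  rw [hsum] at hb
  have hexp_le : Real.exp r ≤ 1 + r + r ^ 2 / 2 + (2 / 9) * r ^ 3 := by
    have := abs_le.mp hb
    have h3 : ((3:ℕ).succ : ℝ) / ((3:ℕ).factorial * (3:ℕ)) = 2 / 9 := by norm_num [Nat.factorial]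
    nlinarith [this.2]
  have key : (1 - r) * Real.exp r ≤ 1 - r ^ 2 / 2 := by
    have : (1 - r) * Real.exp r ≤ (1 - r) * (1 + r + r ^ 2 / 2 + (2 / 9) * r ^ 3) := by
      apply mul_le_mul_of_nonneg_left hexp_le (by linarith)
    nlinarith
  have h2 : (1 : ℝ) - r ^ 2 / 2 ≤ Real.exp (-(r ^ 2 / 2)) := by
    have := Real.add_one_le_exp (-(r ^ 2 / 2)); linarith
  have hexp_pos := Real.exp_pos r
  calc 1 - r = (1 - r) * Real.exp r * Real.exp (-r) := by
        rw [mul_assoc, ← Real.exp_add]; simp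
    _ ≤ (1 - r ^ 2 / 2) * Real.exp (-r) := by
        apply mul_le_mul_of_nonneg_right key (Real.exp_pos _).le
    _ ≤ Real.exp (-(r ^ 2 / 2)) * Real.exp (-r) := by
        apply mul_le_mul_of_nonneg_right h2 (Real.exp_pos _).le
    _ = Real.exp (-(r + r ^ 2 / 2)) := by rw [← Real.exp_add]; ring_nf

lemma pointwise_key (k l : ℕ) (n ε u T : ℝ) (hn : 1 ≤ n) (hkl : (k:ℝ) + l = n)
    (hε : 0 < ε) (hT : 1 < T) (hlogT : Real.log T ≤ n * ε ^ 2 / 2)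
    (hu : (k:ℝ) / n ≤ u) (hu1 : u ≤ 1 - ε) :
    T * ((u + ε) ^ k * (1 - (u + ε)) ^ l) ≤ u ^ k * (1 - u) ^ l := by
  have hn0 : (0:ℝ) < n := lt_of_lt_of_le one_pos hn
  have hu0 : 0 ≤ u := le_trans (by positivity) hu
  have h1u : 0 < 1 - u := lt_of_lt_of_le hε (by linarith)
  have hT0 : (0:ℝ) < T := by linarith
  set r : ℝ := ε / (1 - u) with hr
  have hr0 : 0 ≤ r := by positivity
  have hr1 : r ≤ 1 := by rw [hr, div_le_one h1u]; linarith
  have hrε : ε ≤ r := by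
    rw [hr, le_div_iff₀ h1u]; nlinarith
  have hfac2 : (1 - (u + ε)) ^ l ≤ (1 - u) ^ l * Real.exp (-((l:ℝ) * (r + r ^ 2 / 2))) := by
    have h1 : 1 - (u + ε) = (1 - u) * (1 - r) := by
      rw [hr]; field_simp; ring
    rw [h1, mul_pow]
    apply mul_le_mul_of_nonneg_left _ (pow_nonneg h1u.le _)
    calc (1 - r) ^ l ≤ (Real.exp (-(r + r ^ 2 / 2))) ^ l :=
          pow_le_pow_left₀ (by linarith) (one_sub_le_exp_neg hr0 hr1) l
      _ = Real.exp (-((l:ℝ) * (r + r ^ 2 / 2))) := by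
          rw [← Real.exp_nat_mul]; ring_nf
  have hlr : (n:ℝ) * ε ≤ (l:ℝ) * r := by
    -- l ≥ n (1-u) since n*u ≥ k
    have hnu : (k:ℝ) ≤ n * u := by
      rw [div_le_iff₀ hn0] at hu; linarith
    have hl : n * (1 - u) ≤ (l:ℝ) := by nlinarith
    calc n * ε = (n * (1 - u)) * r := by rw [hr]; field_simp
      _ ≤ (l:ℝ) * r := mul_le_mul_of_nonneg_right hl hr0
  have hlr2 : n * ε ^ 2 ≤ (l:ℝ) * r ^ 2 := by
    have h1 : n * ε * r ≤ (l:ℝ) * r * r := mul_le_mul_of_nonneg_right hlr hr0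
    have h2 : n * ε * ε ≤ n * ε * r :=
      mul_le_mul_of_nonneg_left hrε (by positivity)
    nlinarith
  rcases Nat.eq_zero_or_pos k with hk | hk
  · subst hk
    simp only [Nat.cast_zero, pow_zero, one_mul] at *
    have hln : (l:ℝ) = n := by linarith
    calc T * (1 - (u + ε)) ^ l ≤ T * ((1 - u) ^ l * Real.exp (-((l:ℝ) * (r + r ^ 2 / 2)))) :=
          mul_le_mul_of_nonneg_left hfac2 hT0.le
      _ = (1 - u) ^ l * (T * Real.exp (-((l:ℝ) * (r + r ^ 2 / 2)))) := by ring
      _ ≤ (1 - u) ^ l * 1 := by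
          apply mul_le_mul_of_nonneg_left _ (pow_nonneg h1u.le _)
          have hTle : T ≤ Real.exp ((l:ℝ) * (r + r ^ 2 / 2)) := by
            rw [← Real.log_le_iff_le_exp hT0]
            nlinarith
          calc T * Real.exp (-((l:ℝ) * (r + r ^ 2 / 2)))
              ≤ Real.exp ((l:ℝ) * (r + r ^ 2 / 2)) * Real.exp (-((l:ℝ) * (r + r ^ 2 / 2))) :=
                mul_le_mul_of_nonneg_right hTle (Real.exp_pos _).le
            _ = 1 := by rw [← Real.exp_add]; simp
      _ = (1 - u) ^ l := mul_one _
  · have hk1 : (1:ℝ) ≤ k := by exact_mod_cast hk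
    have hup : 0 < u := lt_of_lt_of_le (by positivity) hu
    have hfac1 : (u + ε) ^ k ≤ u ^ k * Real.exp ((k:ℝ) * (ε / u)) := by
      have h1 : u + ε = u * (1 + ε / u) := by field_simp
      rw [h1, mul_pow]
      apply mul_le_mul_of_nonneg_left _ (by positivity)
      calc (1 + ε / u) ^ k ≤ (Real.exp (ε / u)) ^ k := by
            apply pow_le_pow_left₀ (by positivity)
            have := Real.add_one_le_exp (ε / u); linarith
        _ = Real.exp ((k:ℝ) * (ε / u)) := by rw [← Real.exp_nat_mul]
    have hku : (k:ℝ) * (ε / u) ≤ n * ε := by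
      rw [div_le_iff₀ hn0] at hu
      rw [mul_div_assoc'] at *
      rw [div_le_iff₀ hup]
      nlinarith
    have hTle : T * Real.exp ((k:ℝ) * (ε / u)) * Real.exp (-((l:ℝ) * (r + r ^ 2 / 2))) ≤ 1 := by
      have h1 : T ≤ Real.exp ((l:ℝ) * (r + r ^ 2 / 2) - (k:ℝ) * (ε / u)) := by
        rw [← Real.log_le_iff_le_exp hT0]
        nlinarith
      calc T * Real.exp ((k:ℝ) * (ε / u)) * Real.exp (-((l:ℝ) * (r + r ^ 2 / 2)))
          ≤ Real.exp ((l:ℝ) * (r + r ^ 2 / 2) - (k:ℝ) * (ε / u)) *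
              Real.exp ((k:ℝ) * (ε / u)) * Real.exp (-((l:ℝ) * (r + r ^ 2 / 2))) := by
            apply mul_le_mul_of_nonneg_right _ (Real.exp_pos _).le
            exact mul_le_mul_of_nonneg_right h1 (Real.exp_pos _).le
        _ = 1 := by rw [← Real.exp_add, ← Real.exp_add]; simp
    calc T * ((u + ε) ^ k * (1 - (u + ε)) ^ l)
        ≤ T * ((u ^ k * Real.exp ((k:ℝ) * (ε / u))) *
            ((1 - u) ^ l * Real.exp (-((l:ℝ) * (r + r ^ 2 / 2))))) := by
          apply mul_le_mul_of_nonneg_left _ hT0.le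
          apply mul_le_mul hfac1 hfac2 (pow_nonneg (by linarith) _)
            (mul_nonneg (pow_nonneg hu0 _) (Real.exp_pos _).le)
      _ = (u ^ k * (1 - u) ^ l) *
            (T * Real.exp ((k:ℝ) * (ε / u)) * Real.exp (-((l:ℝ) * (r + r ^ 2 / 2)))) := by ring
      _ ≤ (u ^ k * (1 - u) ^ l) * 1 := mul_le_mul_of_nonneg_left hTle
            (mul_nonneg (pow_nonneg hu0 _) (pow_nonneg h1u.le _))
      _ = u ^ k * (1 - u) ^ l := mul_one _

/-- Upper tail bound for a Beta posterior sample: if `θ ~ Beta(a, b)` with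
`n = a + b - 2 ≥ 1` observations and empirical mean `μ̂ = (a-1)/n`, then
`P(θ - μ̂ > sqrt(2 log T / n)) ≤ 1/T` for every `T > 1`. -/
theorem beta_sample_upper_tail
    {Ω : Type*} [MeasurableSpace Ω] (P : Measure Ω) [IsProbabilityMeasure P]
    (a b : ℕ) (ha : 0 < a) (hb : 0 < b) (hn : 1 ≤ a + b - 2)
    (θ : Ω → ℝ) (hθ : Measurable θ) (hdist : P.map θ = betaMeasure a b)
    (T : ℝ) (hT : 1 < T) :
    P {ω | θ ω - ((a : ℝ) - 1) / ((a : ℝ) + b - 2)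
        > Real.sqrt (2 * Real.log T / ((a : ℝ) + b - 2))}
      ≤ ENNReal.ofReal (1 / T) := by
  -- notation
  set k : ℕ := a - 1 with hk
  set l : ℕ := b - 1 with hl
  set g : ℝ → ℝ := fun x => x ^ k * (1 - x) ^ l with hg
  set N : ℝ := (a : ℝ) + b - 2 with hN
  have hab2 : 2 ≤ a + b := by omega
  have hNnat : N = ((a + b - 2 : ℕ) : ℝ) := by
    rw [hN]; push_cast [Nat.cast_sub hab2]; ring
  have hN1 : 1 ≤ N := by rw [hNnat]; exact_mod_cast hn
  have hN0 : 0 < N := lt_of_lt_of_le one_pos hN1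
  have hkR : ((k : ℕ) : ℝ) = (a : ℝ) - 1 := by
    rw [hk]; push_cast [Nat.cast_sub ha]; ring
  have hlR : ((l : ℕ) : ℝ) = (b : ℝ) - 1 := by
    rw [hl]; push_cast [Nat.cast_sub hb]; ring
  have hkl : (k : ℝ) + l = N := by rw [hkR, hlR, hN]; ring
  have hlogT0 : 0 < Real.log T := Real.log_pos hT
  set ε : ℝ := Real.sqrt (2 * Real.log T / N) with hε
  set p : ℝ := ((a : ℝ) - 1) / N with hp
  have hε0 : 0 < ε := Real.sqrt_pos.mpr (by positivity)
  have hε2 : ε ^ 2 = 2 * Real.log T / N := Real.sq_sqrt (by positivity)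
  have hlogT : Real.log T ≤ N * ε ^ 2 / 2 := by rw [hε2]; field_simp; exact le_rfl
  have hp0 : 0 ≤ p := by
    rw [hp]; apply div_nonneg _ hN0.le
    have : (1:ℝ) ≤ a := by exact_mod_cast ha
    linarith
  set y : ℝ := p + ε with hy
  -- continuity facts
  have hgc : Continuous g := by rw [hg]; continuity
  -- rewrite the event as a preimage
  have hset : {ω | θ ω - p > ε} = θ ⁻¹' (Set.Ioi y) := by
    ext ω
    simp only [Set.mem_setOf_eq, Set.mem_preimage, Set.mem_Ioi, hy]
    constructor <;> intro h <;> linarith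
  rw [hset, ← Measure.map_apply hθ measurableSet_Ioi, hdist]
  -- unfold betaMeasure
  rw [betaMeasure, withDensity_apply _ measurableSet_Ioi,
    Measure.restrict_restrict measurableSet_Ioi]
  by_cases hy1 : 1 ≤ y
  · have hempty : Set.Ioi y ∩ Set.Icc (0:ℝ) 1 = ∅ := by
      ext x
      simp only [Set.mem_inter_iff, Set.mem_Ioi, Set.mem_Icc, Set.mem_empty_iff_false,
        iff_false, not_and, and_imp]
      intro hx h0 h1; linarith
    rw [hempty]
    simp
  · push_neg at hy1
    have hy0 : 0 ≤ y := by rw [hy]; linarith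
    have hIoc : Set.Ioi y ∩ Set.Icc (0:ℝ) 1 = Set.Ioc y 1 := by
      ext x
      simp only [Set.mem_inter_iff, Set.mem_Ioi, Set.mem_Icc, Set.mem_Ioc]
      constructor
      · rintro ⟨h1, h2, h3⟩; exact ⟨h1, h3⟩
      · rintro ⟨h1, h2⟩; exact ⟨h1, by linarith, h2⟩
    rw [hIoc]
    -- the normalizer
    set B : ℝ := ∫ t in Set.Icc (0:ℝ) 1, g t with hB
    have hB01 : B = ∫ x in (0:ℝ)..1, g x := by
      rw [hB, integral_Icc_eq_integral_Ioc, ← intervalIntegral.integral_of_le zero_le_one]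
    have hBpos : 0 < B := by
      rw [hB01]
      apply intervalIntegral.intervalIntegral_pos_of_pos_on
        (hgc.intervalIntegrable 0 1) _ one_pos
      intro x hx
      rw [hg]
      have h1 : 0 < x := hx.1
      have h2 : 0 < 1 - x := by have := hx.2; simp at this ⊢; linarith
      positivity
    -- convert lintegral to integral
    have hInt : IntegrableOn (fun x => g x / B) (Set.Ioc y 1) := by
      exact (hgc.div_const B).integrableOn_Ioc
    have hnn : 0 ≤ᶠ[ae (volume.restrict (Set.Ioc y 1))] fun x => g x / B := by
      refine (ae_restrict_iff' measurableSet_Ioc).mpr (ae_of_all _ fun x hx => ?_)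
      have h1 : 0 < x := lt_of_le_of_lt hy0 hx.1
      have h2 : 0 ≤ 1 - x := by have := hx.2; linarith
      rw [hg]
      positivity
    rw [← ofReal_integral_eq_lintegral_ofReal hInt hnn]
    apply ENNReal.ofReal_le_ofReal
    -- real inequality
    rw [integral_div]
    rw [div_le_div_iff₀ hBpos (by linarith : (0:ℝ) < T), one_mul]
    rw [← intervalIntegral.integral_of_le hy1.le]
    have hple : p ≤ 1 - ε := by
      have : y < 1 := hy1
      rw [hy] at this; linarith
    have hshift : ∫ x in y..1, g x = ∫ u in p..(1 - ε), g (u + ε) := by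
      rw [intervalIntegral.integral_comp_add_right g ε, hy]
      norm_num
    rw [hshift]
    have hIgε : IntervalIntegrable (fun u => T * g (u + ε)) volume p (1 - ε) :=
      (continuous_const.mul (hgc.comp (continuous_add_right ε))).intervalIntegrable _ _
    have hkey : ∫ u in p..(1 - ε), T * g (u + ε) ≤ ∫ u in p..(1 - ε), g u := by
      apply intervalIntegral.integral_mono_on hple hIgε (hgc.intervalIntegrable _ _)
      intro u hu
      have hu1 : (k : ℝ) / N ≤ u := by
        rw [hkR, ← hp]; exact hu.1
      simpa [hg] using pointwise_key k l N ε u T hN1 hkl hε0 hT hlogT hu1 hu.2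
    have hnn1 : (0:ℝ) ≤ ∫ u in (0:ℝ)..p, g u := by
      apply intervalIntegral.integral_nonneg hp0
      intro u hu
      have h2 : u ≤ 1 := by have := hu.2; linarith
      exact mul_nonneg (pow_nonneg hu.1 _) (pow_nonneg (by linarith) _)
    have hnn2 : (0:ℝ) ≤ ∫ u in (1 - ε)..1, g u := by
      apply intervalIntegral.integral_nonneg (by linarith)
      intro u hu
      have h1 : 0 ≤ u := le_trans (by linarith : (0:ℝ) ≤ 1 - ε) hu.1
      exact mul_nonneg (pow_nonneg h1 _) (pow_nonneg (by linarith [hu.2]) _)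
    have hadd1 : (∫ u in p..(1 - ε), g u) + (∫ u in (1 - ε)..1, g u) = ∫ u in p..1, g u :=
      intervalIntegral.integral_add_adjacent_intervals (hgc.intervalIntegrable _ _)
        (hgc.intervalIntegrable _ _)
    have hadd2 : (∫ u in (0:ℝ)..p, g u) + (∫ u in p..1, g u) = ∫ u in (0:ℝ)..1, g u :=
      intervalIntegral.integral_add_adjacent_intervals (hgc.intervalIntegrable _ _)
        (hgc.intervalIntegrable _ _)
    have hconst : (∫ u in p..(1 - ε), g (u + ε)) * T = ∫ u in p..(1 - ε), T * g (u + ε) := by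
      rw [intervalIntegral.integral_const_mul]; ring
    rw [hconst, hB01]
    linarith
end

section
/- Let a and b be positive integers with n := a + b - 2 ≥ 1, let μ̂ := (a-1)/n, and let θ be a random variable distributed according to the Beta distribution with parameters a and b. Then for every real T > 1, P( μ̂ - θ > sqrt(2 log T / n) ) ≤ 1/T. -/
open MeasureTheory Real


lemma bslt_chord_log (u v s : ℝ) (hu : 0 < u) (hv : 0 < v) (hs0 : 0 ≤ s) (hs1 : s ≤ 1) :
    (1-s) * log u + s * log v ≤ log ((1-s)*u + s*v) := by
  have := strictConcaveOn_log_Ioi.concaveOn.2 (Set.mem_Ioi.2 hu) (Set.mem_Ioi.2 hv)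
    (by linarith : (0:ℝ) ≤ 1 - s) hs0 (by ring)
  simpa [smul_eq_mul] using this

lemma bslt_exp_integral (c x u v : ℝ) (hc : c ≠ 0) :
    ∫ t in u..v, Real.exp (c*(t-x)) = (Real.exp (c*(v-x)) - Real.exp (c*(u-x)))/c := by
  have h : ∀ t ∈ Set.uIcc u v, HasDerivAt (fun t => Real.exp (c*(t-x))/c) (Real.exp (c*(t-x))) t := by
    intro t _
    have h1 : HasDerivAt (fun t : ℝ => c*(t-x)) c t := by
      simpa using ((hasDerivAt_id t).sub_const x).const_mul c
    have h2 := (h1.exp).div_const c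
    simpa [mul_div_cancel_right₀ _ hc] using h2
  rw [intervalIntegral.integral_eq_sub_of_hasDerivAt h
    ((Real.continuous_exp.comp (by continuity)).intervalIntegrable u v)]
  ring

set_option maxHeartbeats 2000000 in
lemma bslt_key (a b : ℕ) (hb : 1 ≤ b) (n p ε x T : ℝ)
    (hn : 1 ≤ n) (hna : n = (a:ℝ)+b-2) (hpdef : p = ((a:ℝ)-1)/n) (hε : 0 < ε)
    (hxdef : x = p - ε) (hx0 : 0 < x) (hT : 1 < T) (hεT : ε^2 = 2*Real.log T/n) :
    T * (∫ t in (0:ℝ)..x, t^(a-1)*(1-t)^(b-1)) ≤ ∫ t in (0:ℝ)..1, t^(a-1)*(1-t)^(b-1) := by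
  have hn0 : 0 < n := lt_of_lt_of_le one_pos hn
  have hlogT : 0 < Real.log T := Real.log_pos hT
  have hnε2 : n * ε^2 = 2 * Real.log T := by
    rw [hεT]; field_simp
  have hp0 : 0 < p := by rw [hxdef] at hx0; linarith
  have hαeq : (a:ℝ) - 1 = n * p := by rw [hpdef]; field_simp
  have hα : 0 < (a:ℝ) - 1 := by rw [hαeq]; positivity
  have hβ : 0 ≤ (b:ℝ) - 1 := by
    have : (1:ℝ) ≤ (b:ℝ) := by exact_mod_cast hb
    linarith
  have hβeq : (b:ℝ) - 1 = n * (1-p) := by rw [hna] at *; nlinarith [hαeq]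
  have hp1 : p ≤ 1 := by nlinarith [hβeq]
  have hx1 : x < 1 := by rw [hxdef]; linarith
  have ha2 : 1 ≤ a - 1 := by
    have h1 : (1:ℝ) < (a:ℝ) := by linarith
    have h2 : 1 < a := by exact_mod_cast h1
    omega
  have hacast : ((a - 1 : ℕ) : ℝ) = (a:ℝ) - 1 := by
    have : 1 ≤ a := by omega
    push_cast [this]; ring
  have hbcast : ((b - 1 : ℕ) : ℝ) = (b:ℝ) - 1 := by push_cast [hb]; ring
  set g : ℝ → ℝ := fun t => t^(a-1)*(1-t)^(b-1) with hgdef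
  set h : ℝ → ℝ := fun t => ((a:ℝ)-1) * log t + ((b:ℝ)-1) * log (1-t) with hhdef
  have hgc : Continuous g := (continuous_id.pow _).mul ((continuous_const.sub continuous_id).pow _)
  have hg_nonneg : ∀ t ∈ Set.Icc (0:ℝ) 1, 0 ≤ g t := by
    intro t ht
    have := ht.1; have := ht.2
    have h1 : (0:ℝ) ≤ t := ht.1
    have h2 : (0:ℝ) ≤ 1 - t := by linarith [ht.2]
    positivity
  have hg_eq : ∀ t : ℝ, 0 < t → (t < 1 ∨ b = 1) → g t = Real.exp (h t) := by
    intro t ht hcase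
    rcases hcase with ht1 | hb1
    · have h1t : 0 < 1 - t := by linarith
      simp only [hgdef, hhdef]
      rw [Real.exp_add, ← hacast, ← hbcast, ← Real.log_pow, ← Real.log_pow,
        Real.exp_log (by positivity), Real.exp_log (by positivity)]
    · subst hb1
      simp only [hgdef, hhdef]
      norm_num
      rw [← hacast, ← Real.log_pow, Real.exp_log (by positivity)]
  -- tangent line inequality at x
  set lam : ℝ := ((a:ℝ)-1)/x - ((b:ℝ)-1)/(1-x) with hlamdef
  have hxne : x ≠ 0 := ne_of_gt hx0
  have h1x : (0:ℝ) < 1 - x := by linarith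
  have h1xne : (1:ℝ) - x ≠ 0 := ne_of_gt h1x
  have tangent : ∀ t : ℝ, 0 < t → (t < 1 ∨ (b:ℝ) = 1) → h t ≤ h x + lam * (t - x) := by
    intro t ht hcase
    have part1 : ((a:ℝ)-1) * log t ≤ ((a:ℝ)-1) * log x + ((a:ℝ)-1) * ((t-x)/x) := by
      have hlog : log t - log x ≤ (t-x)/x := by
        have h1 : log (t/x) ≤ t/x - 1 := Real.log_le_sub_one_of_pos (by positivity)
        rw [Real.log_div (ne_of_gt ht) hxne] at h1
        have : t/x - 1 = (t-x)/x := by field_simp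
        linarith [this ▸ h1]
      have := mul_le_mul_of_nonneg_left hlog hα.le
      linarith
    have part2 : ((b:ℝ)-1) * log (1-t) ≤ ((b:ℝ)-1) * log (1-x) + ((b:ℝ)-1) * ((x-t)/(1-x)) := by
      rcases hcase with ht1 | hb1
      · have h1t : 0 < 1 - t := by linarith
        have hlog : log (1-t) - log (1-x) ≤ (x-t)/(1-x) := by
          have h1 : log ((1-t)/(1-x)) ≤ (1-t)/(1-x) - 1 := Real.log_le_sub_one_of_pos (by positivity)
          rw [Real.log_div (ne_of_gt h1t) h1xne] at h1
          have : (1-t)/(1-x) - 1 = (x-t)/(1-x) := by field_simp; try ring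
          linarith [this ▸ h1]
        have := mul_le_mul_of_nonneg_left hlog hβ
        linarith
      · rw [hb1]; norm_num
    have hiden : lam * (t-x) = ((a:ℝ)-1) * ((t-x)/x) + ((b:ℝ)-1) * ((x-t)/(1-x)) := by
      rw [hlamdef]; field_simp; try ring
    simp only [hhdef]
    rw [hiden]
    linarith
  have hlam_eq : lam * (x*(1-x)) = n * ε := by
    have step : lam * (x*(1-x)) = ((a:ℝ)-1)*(1-x) - ((b:ℝ)-1)*x := by
      rw [hlamdef]; field_simp
    rw [step, hαeq, hβeq, hxdef]; ring
  have hlam_pos : 0 < lam := by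
    have hx1x : 0 < x*(1-x) := by positivity
    nlinarith [hlam_eq, mul_pos hn0 hε]
  -- D := h p - h x
  set D : ℝ := h p - h x with hDdef
  have hp_or : p < 1 ∨ (b:ℝ) = 1 := by
    rcases eq_or_lt_of_le hβ with he | hl
    · right; linarith
    · left; nlinarith [hβeq]
  have hD_tangent : D ≤ ε * lam := by
    have ht := tangent p hp0 hp_or
    have hpx : p - x = ε := by rw [hxdef]; ring
    rw [hpx] at ht
    simp only [hDdef]
    nlinarith [ht]
  have hpx : p - x = ε := by rw [hxdef]; ring
  have hD_ge : Real.log T ≤ D := by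
    rcases hp_or with hplt | hb1
    · -- b ≥ 2 case: p < 1, use monotonicity of F
      set F : ℝ → ℝ := fun q => ((a:ℝ)-1) * log q + ((b:ℝ)-1) * log (1-q) + (n/2)*(p-q)^2
        with hFdef
      have hxp : x < p := by linarith
      have hsub : Set.Icc x p ⊆ Set.Ioo (0:ℝ) 1 := by
        intro q hq
        exact ⟨lt_of_lt_of_le hx0 hq.1, lt_of_le_of_lt hq.2 hplt⟩
      have hcont : ContinuousOn F (Set.Icc x p) := by
        apply ContinuousOn.add
        apply ContinuousOn.add
        · exact continuousOn_const.mul (ContinuousOn.log continuousOn_id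
            (fun q hq => ne_of_gt (hsub hq).1))
        · exact continuousOn_const.mul (ContinuousOn.log
            (continuousOn_const.sub continuousOn_id)
            (fun q hq => by have := (hsub hq).2; simp only [Set.mem_Icc] at *; intro hc; nlinarith))
        · exact (continuous_const.mul ((continuous_const.sub continuous_id).pow 2)).continuousOn
      have hderivF : ∀ q ∈ Set.Ioo x p,
          HasDerivAt F (((a:ℝ)-1)/q - ((b:ℝ)-1)/(1-q) - n*(p-q)) q := by
        intro q hq
        have hq0 : 0 < q := lt_trans hx0 hq.1
        have hq1 : q < 1 := lt_trans hq.2 hplt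
        have h1q : 0 < 1 - q := by linarith
        have d1 : HasDerivAt (fun y : ℝ => ((a:ℝ)-1) * log y) (((a:ℝ)-1) * q⁻¹) q :=
          (Real.hasDerivAt_log hq0.ne').const_mul _
        have d2 : HasDerivAt (fun y : ℝ => (1:ℝ) - y) (-1) q := by
          simpa using (hasDerivAt_id q).const_sub (1:ℝ)
        have d3 : HasDerivAt (fun y : ℝ => log (1-y)) ((1-q)⁻¹ * (-1)) q :=
          (Real.hasDerivAt_log (ne_of_gt h1q)).comp q d2
        have d4 := d3.const_mul ((b:ℝ)-1)
        have d5 : HasDerivAt (fun y : ℝ => (p-y)) (-1) q := by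
          simpa using (hasDerivAt_id q).const_sub p
        have d6 := (d5.pow 2).const_mul (n/2)
        have : HasDerivAt F ((↑a - 1) * q⁻¹ + (↑b - 1) * ((1 - q)⁻¹ * -1) + n / 2 * (↑2 * (p - q) ^ (2 - 1) * -1)) q :=
          (d1.add d4).add d6
        convert this using 1
        field_simp
        ring
      have hmono : MonotoneOn F (Set.Icc x p) := by
        apply monotoneOn_of_deriv_nonneg (convex_Icc x p) hcont
        · intro q hq
          rw [interior_Icc] at hq
          exact (hderivF q hq).differentiableAt.differentiableWithinAt
        · intro q hq
          rw [interior_Icc] at hq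
          rw [(hderivF q hq).deriv]
          have hq0 : 0 < q := lt_trans hx0 hq.1
          have hq1 : q < 1 := lt_trans hq.2 hplt
          have h1q : 0 < 1 - q := by linarith
          have e1 : ((a:ℝ)-1)/q - ((b:ℝ)-1)/(1-q) = n*(p-q)/(q*(1-q)) := by
            rw [hαeq, hβeq]; field_simp; ring
          rw [e1]
          have h7 : 0 < q*(1-q) := by positivity
          have h6 : q*(1-q) ≤ 1 := by nlinarith
          have h8 : 0 ≤ n*(p-q) := mul_nonneg hn0.le (by linarith [hq.2])
          rw [sub_nonneg, le_div_iff₀ h7]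
          nlinarith [h8, h6, h7]
      have happ := hmono (Set.left_mem_Icc.2 hxp.le) (Set.right_mem_Icc.2 hxp.le) hxp.le
      simp only [hFdef] at happ
      simp only [hDdef, hhdef]
      have hpp : p - p = 0 := by ring
      rw [hpx] at happ
      nlinarith [happ, hnε2]
    · -- b = 1 case: p = 1
      have hp_eq : p = 1 := by nlinarith [hβeq, hb1, hn0]
      have hεval : ε = 1 - x := by rw [hxdef, hp_eq] at *; linarith [hpx]
      have hlogx : log x ≤ x - 1 := Real.log_le_sub_one_of_pos hx0
      have hDval : D = -(n * log x) := by
        simp only [hDdef, hhdef]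
        rw [hb1, hp_eq, hαeq, hp_eq]
        norm_num
      rw [hDval]
      have hε1 : ε ≤ 1 := by rw [hεval]; linarith
      have h1 := mul_le_mul_of_nonneg_left hlogx hn0.le
      have h2 : ε^2 ≤ ε := by nlinarith [hε, hε1]
      have h3 := mul_le_mul_of_nonneg_left h2 hn0.le
      have h4 : n*(x-1) = -(n*ε) := by rw [hεval]; ring
      have h5 : 0 ≤ n*ε := by positivity
      linarith [h1, h3, h4, h5, hnε2]
  -- integral bounds
  have hD_pos : 0 < D := lt_of_lt_of_le hlogT hD_ge
  have hgx_pos : 0 < g x := by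
    simp only [hgdef]
    positivity
  have hgx_eq : g x = Real.exp (h x) := hg_eq x hx0 (Or.inl hx1)
  have hN_le : ∫ t in (0:ℝ)..x, g t ≤ g x * ε / D := by
    have hmono_int : ∫ t in (0:ℝ)..x, g t ≤ ∫ t in (0:ℝ)..x, g x * Real.exp (lam*(t-x)) := by
      apply intervalIntegral.integral_mono_on hx0.le (hgc.intervalIntegrable _ _)
        ((continuous_const.mul (Real.continuous_exp.comp
          ((continuous_const.mul (continuous_id.sub continuous_const))))).intervalIntegrable _ _)
      intro t ht
      show g t ≤ g x * Real.exp (lam*(t-x))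
      rcases eq_or_lt_of_le ht.1 with h0 | h0
      · have hgt0 : g t = 0 := by
          simp only [hgdef, ← h0]
          rw [zero_pow (by omega : a-1 ≠ 0)]
          ring
        rw [hgt0]
        positivity
      · have htan := tangent t h0 (Or.inl (lt_of_le_of_lt ht.2 hx1))
        rw [hg_eq t h0 (Or.inl (lt_of_le_of_lt ht.2 hx1)), hgx_eq, ← Real.exp_add]
        exact Real.exp_le_exp.2 htan
    have hval : ∫ t in (0:ℝ)..x, g x * Real.exp (lam*(t-x))
        = g x * ((1 - Real.exp (lam*(0-x)))/lam) := by
      rw [intervalIntegral.integral_const_mul, bslt_exp_integral lam x 0 x hlam_pos.ne']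
      norm_num
    have hstep1 : g x * ((1 - Real.exp (lam*(0-x)))/lam) ≤ g x * (1/lam) := by
      apply mul_le_mul_of_nonneg_left _ hgx_pos.le
      gcongr
      linarith [Real.exp_pos (lam*(0-x))]
    have hstep2 : g x * (1/lam) ≤ g x * ε / D := by
      rw [mul_div_assoc]
      apply mul_le_mul_of_nonneg_left _ hgx_pos.le
      rw [div_le_div_iff₀ hlam_pos hD_pos]
      nlinarith [hD_tangent]
    linarith [hmono_int, hval ▸ hmono_int, hstep1, hstep2, hval]
  have hεD : D/ε ≠ 0 := ne_of_gt (div_pos hD_pos hε)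
  have hM_ge : g x * ε * (Real.exp D - 1) / D ≤ ∫ t in x..p, g t := by
    have hmono_int : ∫ t in x..p, g x * Real.exp ((D/ε)*(t-x)) ≤ ∫ t in x..p, g t := by
      apply intervalIntegral.integral_mono_on (by linarith)
        ((continuous_const.mul (Real.continuous_exp.comp
          ((continuous_const.mul (continuous_id.sub continuous_const))))).intervalIntegrable _ _)
        (hgc.intervalIntegrable _ _)
      intro t ht
      show g x * Real.exp ((D/ε)*(t-x)) ≤ g t
      have ht0 : 0 < t := lt_of_lt_of_le hx0 ht.1
      have htcase : t < 1 ∨ b = 1 := by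
        rcases hp_or with hplt | hb1
        · exact Or.inl (lt_of_le_of_lt ht.2 hplt)
        · exact Or.inr (by exact_mod_cast hb1)
      rw [hg_eq t ht0 htcase, hgx_eq, ← Real.exp_add]
      apply Real.exp_le_exp.2
      set s : ℝ := (t-x)/ε with hsdef
      have hs0 : 0 ≤ s := div_nonneg (by linarith [ht.1]) hε.le
      have hs1 : s ≤ 1 := by
        rw [hsdef, div_le_one hε]
        linarith [ht.2, hpx]
      have hts : t = (1-s)*x + s*p := by
        rw [hsdef]
        field_simp
        linear_combination (x - t)*hpx
      have c1 : ((a:ℝ)-1)*((1-s)*log x + s*log p) ≤ ((a:ℝ)-1)*log t := by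
        apply mul_le_mul_of_nonneg_left _ hα.le
        have := bslt_chord_log x p s hx0 hp0 hs0 hs1
        rw [← hts] at this
        exact this
      have c2 : ((b:ℝ)-1)*((1-s)*log (1-x) + s*log (1-p)) ≤ ((b:ℝ)-1)*log (1-t) := by
        rcases hp_or with hplt | hb1
        · have hcl := bslt_chord_log (1-x) (1-p) s h1x (by linarith) hs0 hs1
          have h1ts : (1-s)*(1-x) + s*(1-p) = 1 - t := by rw [hts]; ring
          rw [h1ts] at hcl
          exact mul_le_mul_of_nonneg_left hcl hβ
        · rw [hb1]; norm_num
      have hsD : D/ε*(t-x) = s*D := by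
        rw [hsdef]
        field_simp
      rw [hsD]
      simp only [hDdef, hhdef]
      nlinarith [c1, c2]
    have hval : ∫ t in x..p, g x * Real.exp ((D/ε)*(t-x))
        = g x * ((Real.exp D - 1)/(D/ε)) := by
      rw [intervalIntegral.integral_const_mul, bslt_exp_integral (D/ε) x x p hεD]
      have e1 : (D/ε)*(p-x) = D := by
        rw [hpx]
        field_simp
      rw [e1]
      norm_num
    have e2 : g x * ((Real.exp D - 1)/(D/ε)) = g x * ε * (Real.exp D - 1) / D := by
      field_simp
    linarith [hmono_int, hval ▸ hmono_int, e2 ▸ hval]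
  have hsplit : (∫ t in (0:ℝ)..1, g t)
      = (∫ t in (0:ℝ)..x, g t) + (∫ t in x..p, g t) + (∫ t in p..1, g t) := by
    have h1 := intervalIntegral.integral_add_adjacent_intervals
      (hgc.intervalIntegrable 0 x : IntervalIntegrable g MeasureTheory.volume 0 x)
      (hgc.intervalIntegrable x p : IntervalIntegrable g MeasureTheory.volume x p)
    have h2 := intervalIntegral.integral_add_adjacent_intervals
      (hgc.intervalIntegrable 0 p : IntervalIntegrable g MeasureTheory.volume 0 p)
      (hgc.intervalIntegrable p 1 : IntervalIntegrable g MeasureTheory.volume p 1)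
    rw [← h2, ← h1]
  have htail : 0 ≤ ∫ t in p..1, g t :=
    intervalIntegral.integral_nonneg hp1 (fun u hu => hg_nonneg u ⟨le_trans hp0.le hu.1, hu.2⟩)
  have hNnn : 0 ≤ ∫ t in (0:ℝ)..x, g t :=
    intervalIntegral.integral_nonneg hx0.le (fun u hu => hg_nonneg u ⟨hu.1, le_trans hu.2 hx1.le⟩)
  have hTD : T ≤ Real.exp D := by
    calc T = Real.exp (Real.log T) := (Real.exp_log (by linarith)).symm
    _ ≤ Real.exp D := Real.exp_le_exp.2 hD_ge
  have key1 : (T-1) * (∫ t in (0:ℝ)..x, g t) ≤ g x * ε * (Real.exp D - 1) / D := by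
    calc (T-1) * (∫ t in (0:ℝ)..x, g t) ≤ (T-1) * (g x * ε / D) :=
          mul_le_mul_of_nonneg_left hN_le (by linarith)
    _ ≤ (Real.exp D - 1) * (g x * ε / D) :=
          mul_le_mul_of_nonneg_right (by linarith) (by positivity)
    _ = g x * ε * (Real.exp D - 1) / D := by ring
  rw [hsplit]
  nlinarith [key1, hM_ge, htail, hNnn]


set_option maxHeartbeats 1000000 in
/-- Lower tail bound for a Beta posterior sample: if `θ ~ Beta(a, b)` with
`n = a + b - 2 ≥ 1` observations and empirical mean `μ̂ = (a-1)/n`, then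
`P(μ̂ - θ > sqrt(2 log T / n)) ≤ 1/T` for every `T > 1`. -/
theorem beta_sample_lower_tail
    {Ω : Type*} [MeasurableSpace Ω] (P : Measure Ω) [IsProbabilityMeasure P]
    (a b : ℕ) (ha : 0 < a) (hb : 0 < b) (hn : 1 ≤ a + b - 2)
    (θ : Ω → ℝ) (hθ : Measurable θ) (hdist : P.map θ = betaMeasure a b)
    (T : ℝ) (hT : 1 < T) :
    P {ω | ((a : ℝ) - 1) / ((a : ℝ) + b - 2) - θ ω
        > Real.sqrt (2 * Real.log T / ((a : ℝ) + b - 2))}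
      ≤ ENNReal.ofReal (1 / T) := by
  have h3 : 3 ≤ a + b := by omega
  have hnR : (1:ℝ) ≤ (a:ℝ) + b - 2 := by
    have : (3:ℝ) ≤ (a:ℝ) + b := by exact_mod_cast h3
    linarith
  set n : ℝ := (a:ℝ) + b - 2 with hndef
  have hn0 : (0:ℝ) < n := by linarith
  have hlogT : 0 < Real.log T := Real.log_pos hT
  set p : ℝ := ((a:ℝ)-1)/n with hpdef
  set ε : ℝ := Real.sqrt (2*Real.log T/n) with hedef
  have hε : 0 < ε := Real.sqrt_pos.2 (by positivity)
  have hε2 : ε^2 = 2*Real.log T/n := Real.sq_sqrt (by positivity)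
  set x : ℝ := p - ε with hxdef
  have hb1R : (1:ℝ) ≤ (b:ℝ) := by exact_mod_cast hb
  have hp1 : p ≤ 1 := by
    rw [hpdef, div_le_one hn0]
    linarith
  have hx1 : x < 1 := by rw [hxdef]; linarith
  have hset : {ω | p - θ ω > ε} = θ ⁻¹' (Set.Iio x) := by
    ext ω
    simp only [Set.mem_setOf_eq, Set.mem_preimage, Set.mem_Iio, hxdef, gt_iff_lt]
    constructor <;> intro hh <;> linarith
  rw [hset, ← MeasureTheory.Measure.map_apply hθ measurableSet_Iio, hdist]
  rw [betaMeasure, MeasureTheory.withDensity_apply _ measurableSet_Iio,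
      MeasureTheory.Measure.restrict_restrict measurableSet_Iio]
  set g : ℝ → ℝ := fun t => t^(a-1)*(1-t)^(b-1) with hgdef
  have hgc : Continuous g := (continuous_id.pow _).mul ((continuous_const.sub continuous_id).pow _)
  set B : ℝ := ∫ t in Set.Icc (0:ℝ) 1, t^(a-1)*(1-t)^(b-1) with hBdef
  have hBeq : B = ∫ t in (0:ℝ)..1, g t := by
    rw [hBdef, MeasureTheory.integral_Icc_eq_integral_Ioc,
      ← intervalIntegral.integral_of_le zero_le_one]
  have hBpos : 0 < B := by
    rw [hBeq]
    apply intervalIntegral.intervalIntegral_pos_of_pos_on (hgc.intervalIntegrable 0 1) _ one_pos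
    intro t ht
    have h1 : 0 < t := ht.1
    have h2 : 0 < 1 - t := by linarith [ht.2]
    simp only [hgdef]
    positivity
  by_cases hx0 : 0 < x
  · have hinter : Set.Iio x ∩ Set.Icc (0:ℝ) 1 = Set.Ico 0 x := by
      ext y
      simp only [Set.mem_inter_iff, Set.mem_Iio, Set.mem_Icc, Set.mem_Ico]
      constructor
      · rintro ⟨h1, h2, h3⟩; exact ⟨h2, h1⟩
      · rintro ⟨h1, h2⟩; exact ⟨h2, h1, by linarith⟩
    rw [hinter]
    have hint : MeasureTheory.IntegrableOn (fun y => g y / B) (Set.Ico 0 x) := by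
      exact ((hgc.div_const B).integrableOn_Icc).mono_set Set.Ico_subset_Icc_self
    have hae : 0 ≤ᵐ[MeasureTheory.volume.restrict (Set.Ico 0 x)] fun y => g y / B := by
      apply (MeasureTheory.ae_restrict_iff' measurableSet_Ico).2
      apply MeasureTheory.ae_of_all
      intro y hy
      have h1 : (0:ℝ) ≤ y := hy.1
      have h2 : (0:ℝ) ≤ 1 - y := by have := hy.2; linarith
      have : 0 ≤ g y := by simp only [hgdef]; positivity
      positivity
    rw [← MeasureTheory.ofReal_integral_eq_lintegral_ofReal hint hae]
    apply ENNReal.ofReal_le_ofReal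
    have hival : ∫ y in Set.Ico (0:ℝ) x, g y / B = (∫ t in (0:ℝ)..x, g t) / B := by
      rw [MeasureTheory.setIntegral_congr_set MeasureTheory.Ico_ae_eq_Ioc,
        ← intervalIntegral.integral_of_le hx0.le, intervalIntegral.integral_div]
    rw [hival, div_le_div_iff₀ hBpos (by linarith : (0:ℝ) < T)]
    have hkey := bslt_key a b hb n p ε x T hnR hndef hpdef hε hxdef hx0 hT hε2
    rw [← hBeq] at hkey
    nlinarith [hkey]
  · have hinter : Set.Iio x ∩ Set.Icc (0:ℝ) 1 = ∅ := by
      ext y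
      simp only [Set.mem_inter_iff, Set.mem_Iio, Set.mem_Icc, Set.mem_empty_iff_false,
        iff_false, not_and]
      intro h1 h2
      push_neg at hx0
      linarith
    rw [hinter]
    simp
end

section
/- Let S be a nonempty finite index set of cardinality s partitioned into disjoint subsets S₁ and S₂ (S = S₁ ∪ S₂), let B > 0, Δ > 0, let k̃ be a positive integer, and let ε > 0 satisfy Δ > 2B(k̃² + 2)ε. Suppose we are given real numbers θ_i, μ̂_i, μ_i for each i ∈ S, and nonnegative reals c_i for each i ∈ S₂, such that: (1) |θ_i - μ̂_i| ≤ Δ/(2Bs) - (k̃²+2)ε/s for every i ∈ S₁, (2) |θ_i - μ̂_i| ≤ c_i for every i ∈ S₂, (3) Σ_{i∈S} |μ̂_i - μ_i| ≤ ε, and (4) Σ_{i∈S} |θ_i - μ_i| > Δ/B - (k̃²+1)ε. Then Δ ≤ 2B Σ_{i∈S₂} c_i. -/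
open Real Finset

/-- Deterministic charging inequality: if the triggering set `S` is partitioned
into well-explored arms `S₁` and under-explored arms `S₂`, and the sampled
vector is far from the true means in ℓ₁ norm, then the gap `Δ` is charged to
the confidence radii of the under-explored arms. -/
theorem gap_charging_inequality
    {ι : Type*} [DecidableEq ι] (S S₁ S₂ : Finset ι) (hS : S.Nonempty)
    (hdisj : Disjoint S₁ S₂) (hunion : S = S₁ ∪ S₂)
    (B Δ : ℝ) (hB : 0 < B) (hΔ : 0 < Δ)
    (k : ℕ) (hk : 1 ≤ k) (ε : ℝ) (hε : 0 < ε)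
    (hgap : 2 * B * ((k : ℝ) ^ 2 + 2) * ε < Δ)
    (θ μhat μ : ι → ℝ) (c : ι → ℝ) (hc : ∀ i ∈ S₂, 0 ≤ c i)
    (h1 : ∀ i ∈ S₁,
      |θ i - μhat i| ≤ Δ / (2 * B * S.card) - ((k : ℝ) ^ 2 + 2) * ε / S.card)
    (h2 : ∀ i ∈ S₂, |θ i - μhat i| ≤ c i)
    (h3 : ∑ i ∈ S, |μhat i - μ i| ≤ ε)
    (h4 : Δ / B - ((k : ℝ) ^ 2 + 1) * ε < ∑ i ∈ S, |θ i - μ i|) :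
    Δ ≤ 2 * B * ∑ i ∈ S₂, c i := by
  set sc : ℝ := (S.card : ℝ) with hsc_def
  have hsc : 0 < sc := by
    rw [hsc_def]; exact_mod_cast Finset.card_pos.mpr hS
  set b : ℝ := Δ / (2 * B * sc) - ((k : ℝ) ^ 2 + 2) * ε / sc with hb_def
  have hbpos : 0 ≤ b := by
    have heq : b = (Δ - 2 * B * ((k : ℝ) ^ 2 + 2) * ε) / (2 * B * sc) := by
      rw [hb_def]
      field_simp [hb_def]
    rw [heq]
    apply div_nonneg (by linarith) (by positivity)
  -- sum over S₁ bounded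
  have hA : ∑ i ∈ S₁, |θ i - μhat i| ≤ sc * b := by
    calc ∑ i ∈ S₁, |θ i - μhat i| ≤ ∑ _i ∈ S₁, b :=
          Finset.sum_le_sum (fun i hi => h1 i hi)
      _ = (S₁.card : ℝ) * b := by rw [Finset.sum_const, nsmul_eq_mul]
      _ ≤ sc * b := by
          apply mul_le_mul_of_nonneg_right _ hbpos
          rw [hsc_def]
          exact_mod_cast Finset.card_le_card (hunion ▸ Finset.subset_union_left)
  have hscb : sc * b = Δ / (2 * B) - ((k : ℝ) ^ 2 + 2) * ε := by
    rw [hb_def]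
    field_simp [hb_def]
  have htri : ∑ i ∈ S, |θ i - μ i| ≤
      ∑ i ∈ S, |θ i - μhat i| + ∑ i ∈ S, |μhat i - μ i| := by
    rw [← Finset.sum_add_distrib]
    apply Finset.sum_le_sum
    intro i _
    calc |θ i - μ i| = |(θ i - μhat i) + (μhat i - μ i)| := by ring_nf
      _ ≤ |θ i - μhat i| + |μhat i - μ i| := abs_add_le _ _
  have hsplit : ∑ i ∈ S, |θ i - μhat i| =
      ∑ i ∈ S₁, |θ i - μhat i| + ∑ i ∈ S₂, |θ i - μhat i| := by
    rw [hunion, Finset.sum_union hdisj]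
  have hB2 : ∑ i ∈ S₂, |θ i - μhat i| ≤ ∑ i ∈ S₂, c i :=
    Finset.sum_le_sum h2
  have key : Δ / B - ((k : ℝ) ^ 2 + 1) * ε <
      (Δ / (2 * B) - ((k : ℝ) ^ 2 + 2) * ε) + ∑ i ∈ S₂, c i + ε := by
    calc Δ / B - ((k : ℝ) ^ 2 + 1) * ε < ∑ i ∈ S, |θ i - μ i| := h4
      _ ≤ ∑ i ∈ S, |θ i - μhat i| + ∑ i ∈ S, |μhat i - μ i| := htri
      _ ≤ (∑ i ∈ S₁, |θ i - μhat i| + ∑ i ∈ S₂, |θ i - μhat i|) + ε := by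
          rw [hsplit]; linarith
      _ ≤ (Δ / (2 * B) - ((k : ℝ) ^ 2 + 2) * ε) + ∑ i ∈ S₂, c i + ε := by
          have hA' : ∑ i ∈ S₁, |θ i - μhat i| ≤ Δ / (2 * B) - ((k : ℝ) ^ 2 + 2) * ε :=
            hscb ▸ hA
          linarith
  have hhalf : Δ / (2 * B) < ∑ i ∈ S₂, c i := by
    have : Δ / B - Δ / (2 * B) = Δ / (2 * B) := by field_simp; ring
    linarith
  have := (div_lt_iff₀ (by positivity : (0:ℝ) < 2 * B)).mp hhalf
  linarith
end
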